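/- For every z ∈ 𝔻, the map F is conformal at z, i.e. ‖∂F/∂x(z)‖ = ‖∂F/∂y(z)‖ and ⟨∂F/∂x(z), ∂F/∂y(z)⟩ = 0, if and only if f₁'(z)f₂'(z) + f₃'(z)f₄'(z) = 0. In particular, F is conformal on all of 𝔻 if and only if f₁'f₂' + f₃'f₄' ≡ 0 on 𝔻. -/

import Mathlib

open Complex ComplexConjugate Metric

/-- The Euclidean inner product on `ℝ⁴ ≅ ℂ²`. -/
noncomputable def inner4 (u v : ℂ × ℂ) : ℝ :=
  (u.1 * conj v.1).re + (u.2 * conj v.2).re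

/-- The Euclidean norm on `ℝ⁴ ≅ ℂ²`. -/
noncomputable def norm4 (u : ℂ × ℂ) : ℝ :=
  Real.sqrt (Complex.normSq u.1 + Complex.normSq u.2)

lemma fderiv_eval_aux (f₁ f₂ f₃ f₄ : ℂ → ℂ) (a b c d z : ℂ)
    (h1 : HasDerivAt f₁ a z) (h2 : HasDerivAt f₂ b z)
    (h3 : HasDerivAt f₃ c z) (h4 : HasDerivAt f₄ d z)
    (F : ℂ → ℂ × ℂ)
    (hF : ∀ w, F w = (f₁ w + conj (f₂ w), f₃ w + conj (f₄ w))) (v : ℂ) :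
    fderiv ℝ F z v = (a * v + conj (b * v), c * v + conj (d * v)) := by
  have hc2 : HasFDerivAt (fun w => conj (f₂ w))
      ((Complex.conjCLE.toContinuousLinearMap.restrictScalars ℝ).comp
      ((ContinuousLinearMap.smulRight (1 : ℂ →L[ℂ] ℂ) b).restrictScalars ℝ)) z :=
    (Complex.conjCLE.toContinuousLinearMap.restrictScalars ℝ).hasFDerivAt.comp z
      (h2.hasFDerivAt.restrictScalars ℝ)
  have hc4 : HasFDerivAt (fun w => conj (f₄ w))
      ((Complex.conjCLE.toContinuousLinearMap.restrictScalars ℝ).comp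
      ((ContinuousLinearMap.smulRight (1 : ℂ →L[ℂ] ℂ) d).restrictScalars ℝ)) z :=
    (Complex.conjCLE.toContinuousLinearMap.restrictScalars ℝ).hasFDerivAt.comp z
      (h4.hasFDerivAt.restrictScalars ℝ)
  have hfst := (h1.hasFDerivAt.restrictScalars ℝ).add hc2
  have hsnd := (h3.hasFDerivAt.restrictScalars ℝ).add hc4
  have hprod : HasFDerivAt (fun w => (f₁ w + conj (f₂ w), f₃ w + conj (f₄ w))) _ z :=
    HasFDerivAt.prodMk hfst hsnd
  have hFeq : F = fun w => (f₁ w + conj (f₂ w), f₃ w + conj (f₄ w)) := funext hF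
  rw [hFeq.symm] at hprod
  rw [hprod.fderiv]
  simp [ContinuousLinearMap.prod_apply, mul_comm]

lemma point_aux (a b c d : ℂ) :
    (norm4 (a * 1 + conj (b * 1), c * 1 + conj (d * 1)) =
        norm4 (a * Complex.I + conj (b * Complex.I), c * Complex.I + conj (d * Complex.I)) ∧
      inner4 (a * 1 + conj (b * 1), c * 1 + conj (d * 1))
        (a * Complex.I + conj (b * Complex.I), c * Complex.I + conj (d * Complex.I)) = 0) ↔
    a * b + c * d = 0 := by
  unfold norm4 inner4
  rw [Real.sqrt_inj (add_nonneg (Complex.normSq_nonneg _) (Complex.normSq_nonneg _))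
    (add_nonneg (Complex.normSq_nonneg _) (Complex.normSq_nonneg _)), Complex.ext_iff]
  simp only [Complex.normSq_apply, Complex.add_re, Complex.add_im, Complex.mul_re,
    Complex.mul_im, Complex.conj_re, Complex.conj_im, Complex.one_re, Complex.one_im,
    Complex.I_re, Complex.I_im, Complex.zero_re, Complex.zero_im]
  ring_nf
  constructor <;> rintro ⟨h1, h2⟩ <;> constructor <;> linarith

/-- With `F(z) = (f₁ z + conj (f₂ z), f₃ z + conj (f₄ z))`, `f₁,…,f₄`
holomorphic on the unit disk, `F` is conformal at `z ∈ 𝔻` iff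
`f₁'(z)f₂'(z) + f₃'(z)f₄'(z) = 0`; in particular `F` is conformal on all of `𝔻` iff
`f₁'f₂' + f₃'f₄' ≡ 0` on `𝔻`. -/
theorem conformal_iff_quadratic_relation
    (f₁ f₂ f₃ f₄ f₁' f₂' f₃' f₄' : ℂ → ℂ)
    (hf₁ : ∀ z ∈ ball (0:ℂ) 1, HasDerivAt f₁ (f₁' z) z)
    (hf₂ : ∀ z ∈ ball (0:ℂ) 1, HasDerivAt f₂ (f₂' z) z)
    (hf₃ : ∀ z ∈ ball (0:ℂ) 1, HasDerivAt f₃ (f₃' z) z)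
    (hf₄ : ∀ z ∈ ball (0:ℂ) 1, HasDerivAt f₄ (f₄' z) z)
    (F : ℂ → ℂ × ℂ)
    (hF : ∀ z, F z = (f₁ z + conj (f₂ z), f₃ z + conj (f₄ z))) :
    (∀ z ∈ ball (0:ℂ) 1,
      (norm4 (fderiv ℝ F z 1) = norm4 (fderiv ℝ F z Complex.I) ∧
        inner4 (fderiv ℝ F z 1) (fderiv ℝ F z Complex.I) = 0) ↔
      f₁' z * f₂' z + f₃' z * f₄' z = 0) ∧
    ((∀ z ∈ ball (0:ℂ) 1,
      norm4 (fderiv ℝ F z 1) = norm4 (fderiv ℝ F z Complex.I) ∧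
        inner4 (fderiv ℝ F z 1) (fderiv ℝ F z Complex.I) = 0) ↔
      (∀ z ∈ ball (0:ℂ) 1, f₁' z * f₂' z + f₃' z * f₄' z = 0)) := by
  have key : ∀ z ∈ ball (0:ℂ) 1,
      (norm4 (fderiv ℝ F z 1) = norm4 (fderiv ℝ F z Complex.I) ∧
        inner4 (fderiv ℝ F z 1) (fderiv ℝ F z Complex.I) = 0) ↔
      f₁' z * f₂' z + f₃' z * f₄' z = 0 := by
    intro z hz
    rw [fderiv_eval_aux f₁ f₂ f₃ f₄ (f₁' z) (f₂' z) (f₃' z) (f₄' z) z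
        (hf₁ z hz) (hf₂ z hz) (hf₃ z hz) (hf₄ z hz) F hF 1,
      fderiv_eval_aux f₁ f₂ f₃ f₄ (f₁' z) (f₂' z) (f₃' z) (f₄' z) z
        (hf₁ z hz) (hf₂ z hz) (hf₃ z hz) (hf₄ z hz) F hF Complex.I]
    exact point_aux _ _ _ _
  exact ⟨key, forall₂_congr key⟩
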